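/- If |a| < 1 and |b| < 1, then for every initial condition (x_0, y_0), the orbit (x_k, y_k) of the Zeraoulia–Sprott map satisfies x_k → 0 and y_k → 0 as k → ∞; i.e., the origin is globally asymptotically stable. -/

import Mathlib

open Filter Topology

noncomputable def orbit (a b : ℝ) (p : ℝ × ℝ) : ℕ → ℝ × ℝ
  | 0 => p
  | k + 1 =>
    let q := orbit a b p k
    (-a * q.1 / (1 + q.2 ^ 2), q.1 + b * q.2)

theorem stmt1 (a b : ℝ) (ha : |a| < 1) (hb : |b| < 1) (x₀ y₀ : ℝ) :
    Tendsto (fun k => (orbit a b (x₀, y₀) k).1) atTop (𝓝 0) ∧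
    Tendsto (fun k => (orbit a b (x₀, y₀) k).2) atTop (𝓝 0) := by
  set r : ℝ := max |a| |b| with hr
  have hr0 : 0 ≤ r := le_trans (abs_nonneg a) (le_max_left _ _)
  have hr1 : r < 1 := max_lt ha hb
  have hra : |a| ≤ r := le_max_left _ _
  have hrb : |b| ≤ r := le_max_right _ _
  -- key step bound for x
  have hxstep : ∀ k, |(orbit a b (x₀, y₀) (k + 1)).1| ≤ r * |(orbit a b (x₀, y₀) k).1| := by
    intro k
    show |(-a * (orbit a b (x₀, y₀) k).1 / (1 + (orbit a b (x₀, y₀) k).2 ^ 2))| ≤ _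
    set x := (orbit a b (x₀, y₀) k).1
    set y := (orbit a b (x₀, y₀) k).2
    have hden : (1 : ℝ) ≤ 1 + y ^ 2 := by nlinarith [sq_nonneg y]
    have hden0 : (0 : ℝ) < 1 + y ^ 2 := by linarith
    rw [abs_div, abs_of_pos hden0]
    calc |(-a * x)| / (1 + y ^ 2) ≤ |(-a * x)| / 1 :=
          div_le_div_of_nonneg_left (abs_nonneg _) one_pos hden
      _ = |a| * |x| := by rw [div_one, abs_mul, abs_neg]
      _ ≤ r * |x| := mul_le_mul_of_nonneg_right hra (abs_nonneg _)
  have hx : ∀ k, |(orbit a b (x₀, y₀) k).1| ≤ r ^ k * |x₀| := by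
    intro k
    induction k with
    | zero => simp [orbit]
    | succ k ih =>
      calc |(orbit a b (x₀, y₀) (k + 1)).1| ≤ r * |(orbit a b (x₀, y₀) k).1| := hxstep k
        _ ≤ r * (r ^ k * |x₀|) := mul_le_mul_of_nonneg_left ih hr0
        _ = r ^ (k + 1) * |x₀| := by ring
  have hy : ∀ k, |(orbit a b (x₀, y₀) k).2| ≤ r ^ k * |y₀| + k * r ^ (k - 1) * |x₀| := by
    intro k
    induction k with
    | zero => simp [orbit]
    | succ k ih =>
      have hstep : |(orbit a b (x₀, y₀) (k + 1)).2|
          ≤ |(orbit a b (x₀, y₀) k).1| + r * |(orbit a b (x₀, y₀) k).2| := by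
        show |(orbit a b (x₀, y₀) k).1 + b * (orbit a b (x₀, y₀) k).2| ≤ _
        calc |(orbit a b (x₀, y₀) k).1 + b * (orbit a b (x₀, y₀) k).2|
            ≤ |(orbit a b (x₀, y₀) k).1| + |b * (orbit a b (x₀, y₀) k).2| := abs_add_le _ _
          _ ≤ _ := by
              rw [abs_mul]
              exact add_le_add (le_refl _) (mul_le_mul_of_nonneg_right hrb (abs_nonneg _))
      have hkr : r * ((k : ℝ) * r ^ (k - 1)) ≤ (k : ℝ) * r ^ k := by
        rcases Nat.eq_zero_or_pos k with h0 | hpos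
        · subst h0; simp
        · obtain ⟨m, rfl⟩ := Nat.exists_eq_succ_of_ne_zero hpos.ne'
          have : m + 1 - 1 = m := rfl
          rw [this]
          have : r * (((m : ℝ) + 1) * r ^ m) = ((m : ℝ) + 1) * r ^ (m + 1) := by ring
          push_cast
          rw [this]
      calc |(orbit a b (x₀, y₀) (k + 1)).2|
          ≤ |(orbit a b (x₀, y₀) k).1| + r * |(orbit a b (x₀, y₀) k).2| := hstep
        _ ≤ r ^ k * |x₀| + r * (r ^ k * |y₀| + (k : ℝ) * r ^ (k - 1) * |x₀|) :=
            add_le_add (hx k) (mul_le_mul_of_nonneg_left ih hr0)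
        _ = r ^ (k + 1) * |y₀| + r ^ k * |x₀| + r * ((k : ℝ) * r ^ (k - 1)) * |x₀| := by ring
        _ ≤ r ^ (k + 1) * |y₀| + r ^ k * |x₀| + (k : ℝ) * r ^ k * |x₀| := by
            have := mul_le_mul_of_nonneg_right hkr (abs_nonneg x₀)
            linarith
        _ = r ^ (k + 1) * |y₀| + ((k : ℝ) + 1) * r ^ ((k + 1) - 1) * |x₀| := by
            simp only [Nat.add_sub_cancel]; ring
        _ = r ^ (k + 1) * |y₀| + ((k + 1 : ℕ) : ℝ) * r ^ ((k + 1) - 1) * |x₀| := by push_cast; ring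
  have hpow : Tendsto (fun k : ℕ => r ^ k) atTop (𝓝 0) :=
    tendsto_pow_atTop_nhds_zero_of_lt_one hr0 hr1
  have hnpow : Tendsto (fun k : ℕ => (k : ℝ) * r ^ k) atTop (𝓝 0) := by
    simpa using tendsto_pow_const_mul_const_pow_of_lt_one 1 hr0 hr1
  have hnpow' : Tendsto (fun k : ℕ => (k : ℝ) * r ^ (k - 1)) atTop (𝓝 0) := by
    rw [← tendsto_add_atTop_iff_nat 1]
    have : (fun k : ℕ => ((k + 1 : ℕ) : ℝ) * r ^ ((k + 1) - 1))
        = fun k : ℕ => (k : ℝ) * r ^ k + r ^ k := by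
      funext k
      simp only [Nat.add_sub_cancel]
      push_cast
      ring
    rw [this]
    simpa using hnpow.add hpow
  constructor
  · apply squeeze_zero_norm (fun k => hx k)
    simpa using hpow.mul_const |x₀|
  · apply squeeze_zero_norm (fun k => hy k)
    have h1 := hpow.mul_const |y₀|
    have h2 := hnpow'.mul_const |x₀|
    simpa using h1.add h2
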